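/- There exist m+1 pairwise distinct elements t_1, …, t_{m+1} of k such that sum_{i=1}^{m+1} t_i^ν = 0 for every integer ν with 1 ≤ ν ≤ m−1. (This is the statement that, when p = 2, every non-maximal vertex of a Hurwitz tree is realizable.) -/

import Mathlib

/-- If `k` is an algebraically closed field of characteristic `2` and `m` is an
odd positive integer, there exist `m+1` pairwise distinct elements `t_1, …, t_{m+1}` of `k`
with `∑ i, t i ^ ν = 0` for every `1 ≤ ν ≤ m − 1`. -/
theorem stmt_7 (k : Type*) [Field k] [IsAlgClosed k] [CharP k 2]
    (m : ℕ) (hm : 0 < m) (hodd : Odd m) :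
    ∃ t : Fin (m + 1) → k, Function.Injective t ∧
      ∀ ν : ℕ, 1 ≤ ν → ν ≤ m - 1 → ∑ i, t i ^ ν = 0 := by
  have hmk : NeZero ((m : k)) := ⟨fun h => by
    have := (CharP.cast_eq_zero_iff k 2 m).mp h
    have := Nat.odd_iff.mp hodd
    omega⟩
  obtain ⟨ζ, hζ⟩ := HasEnoughRootsOfUnity.exists_primitiveRoot k m
  have hζ0 : ζ ≠ 0 := hζ.ne_zero hm.ne'
  refine ⟨fun i => if h : (i : ℕ) = 0 then 0 else ζ ^ ((i : ℕ) - 1), ?_, ?_⟩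
  · intro i j hij
    ext
    dsimp only at hij
    by_cases hi : (i : ℕ) = 0 <;> by_cases hj : (j : ℕ) = 0
    · omega
    · rw [dif_pos hi, dif_neg hj] at hij
      exact absurd hij.symm (pow_ne_zero _ hζ0)
    · rw [dif_neg hi, dif_pos hj] at hij
      exact absurd hij (pow_ne_zero _ hζ0)
    · rw [dif_neg hi, dif_neg hj] at hij
      have hi' : (i : ℕ) - 1 < m := by omega
      have hj' : (j : ℕ) - 1 < m := by omega
      have := hζ.pow_inj hi' hj' hij
      omega
  · intro ν hν1 hν2
    have hνm : ν < m := by omega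
    rw [Fin.sum_univ_succ]
    simp only [Fin.val_zero, dif_pos, Fin.val_succ, Nat.add_eq_zero, one_ne_zero,
      and_false, dif_neg, not_false_iff, Nat.add_sub_cancel]
    simp only [↓reduceDIte]
    rw [zero_pow (by omega : ν ≠ 0), zero_add]
    have key : ∑ i : Fin m, (ζ ^ ν) ^ (i : ℕ) = 0 := by
      have hx1 : ζ ^ ν ≠ 1 := fun h => by
        have := (hζ.pow_eq_one_iff_dvd ν).mp h
        exact absurd (Nat.le_of_dvd (by omega) this) (by omega)
      have hgeom : (∑ i ∈ Finset.range m, (ζ ^ ν) ^ i) * (ζ ^ ν - 1) = (ζ ^ ν) ^ m - 1 := by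
        rw [geom_sum_mul]
      have hxm : (ζ ^ ν) ^ m = 1 := by
        rw [← pow_mul, mul_comm, pow_mul, hζ.pow_eq_one, one_pow]
      rw [hxm, sub_self] at hgeom
      rw [Fin.sum_univ_eq_sum_range]
      exact (mul_eq_zero.mp hgeom).resolve_right (sub_ne_zero.mpr hx1)
    calc ∑ i : Fin m, (ζ ^ (i : ℕ)) ^ ν = ∑ i : Fin m, (ζ ^ ν) ^ (i : ℕ) := by
          refine Finset.sum_congr rfl fun i _ => ?_
          rw [← pow_mul, ← pow_mul, mul_comm]
      _ = 0 := key
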